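/- Let x ∈ S(A,b). Then x is a minimal solution if and only if x_j = δ_j(x) for every j, where δ_j(x) = min{t ∈ [0,1] : for all i, T_L(a_{ij}, t) + ∑_{k ≠ j} T_L(a_{ik}, x_k) ≥ b_i}. -/
import Mathlib


open Finset

noncomputable section

/-- Łukasiewicz t-norm. -/
def TL (a x : ℝ) : ℝ := max (a + x - 1) 0

/-- Solution set of the addition-Łukasiewicz system. -/
def Sset {m n : ℕ} (A : Fin m → Fin n → ℝ) (b : Fin m → ℝ) : Set (Fin n → ℝ) :=
  {x | (∀ j, x j ∈ Set.Icc (0:ℝ) 1) ∧ ∀ i, b i ≤ ∑ j, TL (A i j) (x j)}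

/-- Minimal solution. -/
def IsMinimalSol {m n : ℕ} (A : Fin m → Fin n → ℝ) (b : Fin m → ℝ) (x : Fin n → ℝ) : Prop :=
  x ∈ Sset A b ∧ ∀ y ∈ Sset A b, y ≤ x → y = x

/-- The set F_j(z). -/
def Fset {m n : ℕ} (A : Fin m → Fin n → ℝ) (b : Fin m → ℝ) (j : Fin n) (z : Fin n → ℝ) :
    Set ℝ :=
  {t | t ∈ Set.Icc (0:ℝ) 1 ∧
    ∀ i, b i ≤ TL (A i j) t + ∑ k ∈ Finset.univ.erase j, TL (A i k) (z k)}

/-- Objective Z(x) = max_j x_j. -/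
def Zf {n : ℕ} (x : Fin n → ℝ) : ℝ := ⨆ j, x j

/-- Optimal solution of the minimax problem. -/
def IsOptimal {m n : ℕ} (A : Fin m → Fin n → ℝ) (b : Fin m → ℝ) (x : Fin n → ℝ) : Prop :=
  x ∈ Sset A b ∧ ∀ y ∈ Sset A b, Zf x ≤ Zf y

lemma TL_mono (a : ℝ) {s t : ℝ} (h : s ≤ t) : TL a s ≤ TL a t :=
  max_le_max (by linarith) le_rfl

lemma TL_cont (a : ℝ) : Continuous (fun t => TL a t) :=
  ((continuous_const.add continuous_id).sub continuous_const).max continuous_const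

lemma Fset_closed {m n : ℕ} (A : Fin m → Fin n → ℝ) (b : Fin m → ℝ) (j : Fin n)
    (z : Fin n → ℝ) : IsClosed (Fset A b j z) := by
  have : Fset A b j z = Set.Icc (0:ℝ) 1 ∩
      ⋂ i, {t | b i ≤ TL (A i j) t + ∑ k ∈ Finset.univ.erase j, TL (A i k) (z k)} := by
    ext t; simp [Fset, Set.mem_iInter]
  rw [this]
  exact isClosed_Icc.inter (isClosed_iInter fun i =>
    isClosed_le continuous_const ((TL_cont _).add continuous_const))

lemma mem_Fset_self {m n : ℕ} {A : Fin m → Fin n → ℝ} {b : Fin m → ℝ} (j : Fin n)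
    {x : Fin n → ℝ} (hx : x ∈ Sset A b) : x j ∈ Fset A b j x := by
  refine ⟨hx.1 j, fun i => ?_⟩
  calc b i ≤ ∑ k, TL (A i k) (x k) := hx.2 i
    _ = TL (A i j) (x j) + ∑ k ∈ Finset.univ.erase j, TL (A i k) (x k) :=
        (Finset.add_sum_erase _ (fun k => TL (A i k) (x k)) (Finset.mem_univ j)).symm

theorem stmt11 {m n : ℕ} (A : Fin m → Fin n → ℝ) (b : Fin m → ℝ)
    (hA : ∀ i j, A i j ∈ Set.Icc (0:ℝ) 1) (hb : ∀ i, 0 < b i)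
    (x : Fin n → ℝ) (hx : x ∈ Sset A b) :
    IsMinimalSol A b x ↔ ∀ j, x j = sInf (Fset A b j x) := by
  constructor
  · rintro ⟨-, hmin⟩ j
    have hne : (Fset A b j x).Nonempty := ⟨x j, mem_Fset_self j hx⟩
    have hbdd : BddBelow (Fset A b j x) := ⟨0, fun t ht => ht.1.1⟩
    have hmem : sInf (Fset A b j x) ∈ Fset A b j x :=
      (Fset_closed A b j x).csInf_mem hne hbdd
    set δ := sInf (Fset A b j x) with hδ
    have hle : δ ≤ x j := csInf_le hbdd (mem_Fset_self j hx)
    set y := Function.update x j δ with hy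
    have hyS : y ∈ Sset A b := by
      constructor
      · intro k
        by_cases hk : k = j
        · subst hk; simpa [hy] using hmem.1
        · simpa [hy, Function.update_of_ne hk] using hx.1 k
      · intro i
        have := hmem.2 i
        rw [← Finset.add_sum_erase _ _ (Finset.mem_univ j)]
        have hsum : ∑ k ∈ Finset.univ.erase j, TL (A i k) (y k)
            = ∑ k ∈ Finset.univ.erase j, TL (A i k) (x k) := by
          refine Finset.sum_congr rfl fun k hk => ?_
          rw [hy, Function.update_of_ne (Finset.ne_of_mem_erase hk)]
        rw [hsum]
        simpa [hy] using this
    have hyx : y ≤ x := by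
      intro k
      by_cases hk : k = j
      · subst hk; simpa [hy] using hle
      · simp [hy, Function.update_of_ne hk]
    have := hmin y hyS hyx
    have : y j = x j := by rw [this]
    simpa [hy] using this.symm
  · intro h
    refine ⟨hx, fun y hy hyx => ?_⟩
    funext j
    refine le_antisymm (hyx j) ?_
    have hyF : y j ∈ Fset A b j x := by
      refine ⟨hy.1 j, fun i => ?_⟩
      calc b i ≤ ∑ k, TL (A i k) (y k) := hy.2 i
        _ = TL (A i j) (y j) + ∑ k ∈ Finset.univ.erase j, TL (A i k) (y k) :=
            (Finset.add_sum_erase _ _ (Finset.mem_univ j)).symm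
        _ ≤ TL (A i j) (y j) + ∑ k ∈ Finset.univ.erase j, TL (A i k) (x k) := by
            gcongr with k hk
            exact TL_mono _ (hyx k)
    have : sInf (Fset A b j x) ≤ y j :=
      csInf_le ⟨0, fun t ht => ht.1.1⟩ hyF
    rw [h j]; exact this
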